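/- For p = 2, the Cramér function I of the uniform distribution on (0,1) satisfies: the function m(u) = I''(u)/4 attains its global minimum on (0,1) at u₀ = 1/2, with m(1/2) = 3. -/

import Mathlib

open Real Filter Set Topology

noncomputable def crF (θ : ℝ) : ℝ := if θ = 0 then 1 else (Real.exp θ - 1) / θ
noncomputable def crF1 (θ : ℝ) : ℝ := if θ = 0 then 1/2 else (θ * Real.exp θ - Real.exp θ + 1) / θ^2
noncomputable def crF2 (θ : ℝ) : ℝ := if θ = 0 then 1/3 else ((θ^2 - 2*θ + 2) * Real.exp θ - 2) / θ^3

lemma crF_pos (θ : ℝ) : 0 < crF θ := by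
  unfold crF
  rcases lt_trichotomy θ 0 with h | h | h
  · rw [if_neg h.ne]
    apply div_pos_of_neg_of_neg _ h
    nlinarith [Real.exp_lt_one_iff.2 h]
  · simp [h]
  · rw [if_neg h.ne']
    apply div_pos _ h
    nlinarith [Real.add_one_lt_exp h.ne']

lemma crF_eq {θ : ℝ} (h : θ ≠ 0) : crF θ = (Real.exp θ - 1) / θ := if_neg h
lemma crF1_eq {θ : ℝ} (h : θ ≠ 0) : crF1 θ = (θ * Real.exp θ - Real.exp θ + 1) / θ^2 := if_neg h
lemma crF2_eq {θ : ℝ} (h : θ ≠ 0) : crF2 θ = ((θ^2 - 2*θ + 2) * Real.exp θ - 2) / θ^3 := if_neg h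

lemma hasDerivAt_crF_ne (θ : ℝ) (h : θ ≠ 0) : HasDerivAt crF (crF1 θ) θ := by
  have h1 : HasDerivAt (fun t : ℝ => (Real.exp t - 1) / t)
      ((Real.exp θ * θ - (Real.exp θ - 1) * 1) / θ^2) θ :=
    ((Real.hasDerivAt_exp θ).sub_const 1).div (hasDerivAt_id θ) h
  have h2 : (Real.exp θ * θ - (Real.exp θ - 1) * 1) / θ^2 = crF1 θ := by
    rw [crF1_eq h]; ring_nf
  rw [← h2]
  apply h1.congr_of_eventuallyEq
  filter_upwards [eventually_ne_nhds h] with t ht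
  exact crF_eq ht

lemma hasDerivAt_crF1_ne (θ : ℝ) (h : θ ≠ 0) : HasDerivAt crF1 (crF2 θ) θ := by
  have h1 : HasDerivAt (fun t : ℝ => (t * Real.exp t - Real.exp t + 1) / t^2) (crF2 θ) θ := by
    have hd := ((((hasDerivAt_id θ).mul (Real.hasDerivAt_exp θ)).sub
        (Real.hasDerivAt_exp θ)).add_const 1).div
      (by simpa using hasDerivAt_pow 2 θ : HasDerivAt (fun t : ℝ => t^2) (2*θ) θ)
      (pow_ne_zero 2 h)
    exact hd.congr_deriv (by
      rw [crF2_eq h]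
      simp only [Pi.mul_apply, Pi.sub_apply, id_eq]
      rw [div_eq_div_iff (pow_ne_zero 2 (pow_ne_zero 2 h)) (pow_ne_zero 3 h)]
      ring)
  apply h1.congr_of_eventuallyEq
  filter_upwards [eventually_ne_nhds h] with t ht
  exact crF1_eq ht
lemma tendsto_of_abs_le (f : ℝ → ℝ) (c : ℝ) (h : ∀ᶠ θ in 𝓝[≠] (0:ℝ), |f θ - c| ≤ |θ|) :
    Tendsto f (𝓝[≠] (0:ℝ)) (𝓝 c) := by
  have h0 : Tendsto (fun θ : ℝ => |θ|) (𝓝[≠] (0:ℝ)) (𝓝 0) := by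
    have : Tendsto (fun θ : ℝ => |θ|) (𝓝 (0:ℝ)) (𝓝 |0|) := continuous_abs.tendsto 0
    simpa using this.mono_left (nhdsWithin_le_nhds (s := {(0:ℝ)}ᶜ))
  have := squeeze_zero_norm' (f := fun θ => f θ - c) (a := fun θ : ℝ => |θ|) (by simpa using h) h0
  simpa using this.add_const c

lemma abs_small : ∀ᶠ θ in 𝓝[≠] (0:ℝ), θ ≠ 0 ∧ |θ| ≤ 1 := by
  have h1 : ∀ᶠ θ in 𝓝 (0:ℝ), |θ| ≤ 1 := by
    have : Metric.closedBall (0:ℝ) 1 ∈ 𝓝 (0:ℝ) := Metric.closedBall_mem_nhds 0 one_pos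
    filter_upwards [this] with t ht
    simpa [Real.dist_eq] using ht
  filter_upwards [self_mem_nhdsWithin, h1.filter_mono nhdsWithin_le_nhds] with t ht h2
  exact ⟨ht, h2⟩

lemma exp_taylor3 {θ : ℝ} (h : |θ| ≤ 1) :
    |Real.exp θ - (1 + θ + θ^2/2)| ≤ 2/9 * |θ|^3 := by
  have := Real.exp_bound h (by norm_num : 0 < 3)
  have h2 : (∑ i ∈ Finset.range 3, θ^i / (Nat.factorial i) : ℝ) = 1 + θ + θ^2/2 := by
    norm_num [Finset.sum_range_succ, Nat.factorial]
  rw [h2] at this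
  calc |Real.exp θ - (1 + θ + θ^2/2)| ≤ |θ|^3 * ((3:ℕ).succ / ((Nat.factorial 3) * 3)) := this
    _ = 2/9 * |θ|^3 := by norm_num [Nat.factorial]; ring

lemma exp_taylor5 {θ : ℝ} (h : |θ| ≤ 1) :
    |Real.exp θ - (1 + θ + θ^2/2 + θ^3/6 + θ^4/24)| ≤ 1/100 * |θ|^5 := by
  have := Real.exp_bound h (by norm_num : 0 < 5)
  have h2 : (∑ i ∈ Finset.range 5, θ^i / (Nat.factorial i) : ℝ)
      = 1 + θ + θ^2/2 + θ^3/6 + θ^4/24 := by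
    norm_num [Finset.sum_range_succ, Nat.factorial]
  rw [h2] at this
  calc |Real.exp θ - (1 + θ + θ^2/2 + θ^3/6 + θ^4/24)|
      ≤ |θ|^5 * ((5:ℕ).succ / ((Nat.factorial 5) * 5)) := this
    _ = 1/100 * |θ|^5 := by norm_num [Nat.factorial]; ring

lemma hasDerivAt_crF_zero : HasDerivAt crF (crF1 0) 0 := by
  rw [hasDerivAt_iff_tendsto_slope]
  have : crF1 0 = 1/2 := by simp [crF1]
  rw [this]
  apply tendsto_of_abs_le
  filter_upwards [abs_small] with θ ⟨hθ, hθ1⟩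
  have hcr : slope crF 0 θ - 1/2 = (Real.exp θ - (1 + θ + θ^2/2)) / θ^2 := by
    rw [slope_def_field, crF_eq hθ]
    simp [crF]
    field_simp
    ring
  rw [hcr, abs_div, abs_pow]
  rw [div_le_iff₀ (by positivity)]
  have := exp_taylor3 hθ1
  have h3 : |θ|^3 = |θ| * |θ|^2 := by ring
  nlinarith [abs_pos.2 hθ, pow_pos (abs_pos.2 hθ) 2, abs_nonneg θ]

lemma hasDerivAt_crF1_zero : HasDerivAt crF1 ((1:ℝ)/3) 0 := by
  rw [hasDerivAt_iff_tendsto_slope]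
  apply tendsto_of_abs_le
  filter_upwards [abs_small] with θ ⟨hθ, hθ1⟩
  have hcr : slope crF1 0 θ - 1/3 =
      ((θ - 1) * (Real.exp θ - (1 + θ + θ^2/2 + θ^3/6 + θ^4/24)) + (θ^4/8 + θ^5/24)) / θ^3 := by
    rw [slope_def_field, crF1_eq hθ]
    simp [crF1]
    field_simp
    ring
  rw [hcr, abs_div, abs_pow]
  rw [div_le_iff₀ (by positivity)]
  have h5 := exp_taylor5 hθ1
  have habs : |(θ - 1) * (Real.exp θ - (1 + θ + θ^2/2 + θ^3/6 + θ^4/24)) + (θ^4/8 + θ^5/24)|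
      ≤ |θ - 1| * (1/100 * |θ|^5) + (|θ|^4/8 + |θ|^5/24) := by
    calc _ ≤ |(θ - 1) * (Real.exp θ - (1 + θ + θ^2/2 + θ^3/6 + θ^4/24))| + |θ^4/8 + θ^5/24| :=
          abs_add_le _ _
      _ ≤ |θ - 1| * (1/100 * |θ|^5) + (|θ|^4/8 + |θ|^5/24) := by
          rw [abs_mul]
          refine add_le_add (mul_le_mul_of_nonneg_left h5 (abs_nonneg _)) ?_
          calc |θ^4/8 + θ^5/24| ≤ |θ^4/8| + |θ^5/24| := abs_add_le _ _
            _ = |θ|^4/8 + |θ|^5/24 := by rw [abs_div, abs_div, abs_pow, abs_pow]; norm_num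
  have hθ2 : |θ - 1| ≤ 2 := by
    have := abs_sub θ (1:ℝ)
    simp only [abs_one] at this
    linarith
  have h0 : 0 < |θ| := abs_pos.2 hθ
  calc |(θ - 1) * (Real.exp θ - (1 + θ + θ^2/2 + θ^3/6 + θ^4/24)) + (θ^4/8 + θ^5/24)|
      ≤ |θ - 1| * (1/100 * |θ|^5) + (|θ|^4/8 + |θ|^5/24) := habs
    _ ≤ |θ| * |θ|^3 := by
        have h54 : |θ|^5 ≤ |θ|^4 := by
          calc |θ|^5 = |θ|^4 * |θ| := by ring
            _ ≤ |θ|^4 * 1 := by gcongr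
            _ = |θ|^4 := mul_one _
        have hm : |θ - 1| * (1/100 * |θ|^5) ≤ 2 * (1/100 * |θ|^5) :=
          mul_le_mul_of_nonneg_right hθ2 (by positivity)
        have h44 : |θ| * |θ|^3 = |θ|^4 := by ring
        nlinarith [pow_nonneg (abs_nonneg θ) 5]
lemma sinh_le_mul_cosh {t : ℝ} (ht : 0 ≤ t) : Real.sinh t ≤ t * Real.cosh t := by
  have hmono : MonotoneOn (fun t : ℝ => t * Real.cosh t - Real.sinh t) (Ici 0) := by
    apply monotoneOn_of_deriv_nonneg (convex_Ici 0)
    · exact (((continuous_id.mul Real.continuous_cosh).sub Real.continuous_sinh)).continuousOn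
    · intro x hx
      exact (((hasDerivAt_id' (x := x)).mul (Real.hasDerivAt_cosh x)).sub
        (Real.hasDerivAt_sinh x)).differentiableAt.differentiableWithinAt
    · intro x hx
      rw [interior_Ici] at hx
      have hD := ((hasDerivAt_id' (x := x)).mul (Real.hasDerivAt_cosh x)).sub
          (Real.hasDerivAt_sinh x)
      rw [show (fun t : ℝ => t * Real.cosh t - Real.sinh t)
          = (fun x => x) * Real.cosh - Real.sinh from rfl, hD.deriv]
      have hsn : 0 ≤ Real.sinh x := by
        have := Real.sinh_le_sinh.2 hx.le
        simpa using this
      nlinarith [mul_nonneg (le_of_lt (mem_Ioi.1 hx)) hsn]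
  have := hmono (self_mem_Ici) (mem_Ici.2 ht) ht
  simp at this
  linarith

lemma aux_u' {t : ℝ} (ht : 0 ≤ t) :
    0 ≤ t/3 * Real.sinh t + t^2/6 * Real.cosh t - Real.cosh t + 1 := by
  have hmono : MonotoneOn (fun t : ℝ =>
      t/3 * Real.sinh t + t^2/6 * Real.cosh t - Real.cosh t + 1) (Ici 0) := by
    apply monotoneOn_of_deriv_nonneg (convex_Ici 0)
    · fun_prop
    · intro x hx
      apply DifferentiableAt.differentiableWithinAt
      fun_prop
    · intro x hx
      rw [interior_Ici] at hx
      have hD : HasDerivAt (fun t : ℝ =>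
          t/3 * Real.sinh t + t^2/6 * Real.cosh t - Real.cosh t + 1)
          (2*x/3 * Real.cosh x - 2/3 * Real.sinh x + x^2/6 * Real.sinh x) x := by
        have h1 := ((hasDerivAt_id' (x := x)).div_const 3).mul (Real.hasDerivAt_sinh x)
        have h2 := (((hasDerivAt_pow 2 x)).div_const 6).mul (Real.hasDerivAt_cosh x)
        have h3 := (h1.add h2).sub (Real.hasDerivAt_cosh x)
        have h4 := h3.add_const 1
        exact h4.congr_deriv (by
          push_cast
          ring)
      rw [hD.deriv]
      have hs := sinh_le_mul_cosh hx.le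
      have hsn : 0 ≤ Real.sinh x := by
        have := Real.sinh_le_sinh.2 hx.le
        simpa using this
      nlinarith [mul_nonneg (le_of_lt (mem_Ioi.1 hx)) hsn, sq_nonneg x]
  have h0 := hmono (self_mem_Ici) (mem_Ici.2 ht) ht
  simp only [Real.sinh_zero, Real.cosh_zero] at h0
  norm_num at h0
  linarith

lemma sinh_sub_le {t : ℝ} (ht : 0 ≤ t) : Real.sinh t - t ≤ t^2/6 * Real.sinh t := by
  have hmono : MonotoneOn (fun t : ℝ => t + t^2/6 * Real.sinh t - Real.sinh t) (Ici 0) := by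
    apply monotoneOn_of_deriv_nonneg (convex_Ici 0)
    · fun_prop
    · intro x hx
      apply DifferentiableAt.differentiableWithinAt
      fun_prop
    · intro x hx
      rw [interior_Ici] at hx
      have hD : HasDerivAt (fun t : ℝ => t + t^2/6 * Real.sinh t - Real.sinh t)
          (1 + (x/3 * Real.sinh x + x^2/6 * Real.cosh x) - Real.cosh x) x := by
        have h2 := ((hasDerivAt_pow 2 x).div_const 6).mul (Real.hasDerivAt_sinh x)
        have h3 := ((hasDerivAt_id' (x := x)).add h2).sub (Real.hasDerivAt_sinh x)
        exact h3.congr_deriv (by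
          push_cast
          ring)
      rw [hD.deriv]
      have := aux_u' hx.le
      linarith
  have h0 := hmono (self_mem_Ici) (mem_Ici.2 ht) ht
  simp only [Real.sinh_zero, Real.cosh_zero] at h0
  norm_num at h0
  linarith

lemma sq_lt_sinh_sq {t : ℝ} (ht : t ≠ 0) : t^2 < Real.sinh t ^ 2 := by
  rcases ht.lt_or_gt with h | h
  · have : Real.sinh t < t := Real.sinh_lt_self_iff.2 h
    nlinarith [Real.sinh_neg_iff.2 h]
  · have : t < Real.sinh t := Real.self_lt_sinh_iff.2 h
    nlinarith [Real.sinh_pos_iff.2 h]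

lemma key_sinh (t : ℝ) : 3 * (Real.sinh t ^ 2 - t^2) ≤ t^2 * Real.sinh t ^ 2 := by
  wlog ht : 0 ≤ t with H
  · have := H (-t) (by linarith [not_le.1 ht])
    simpa [Real.sinh_neg] using this
  have h1 := sinh_sub_le ht
  have h2 : t ≤ Real.sinh t := by
    rcases eq_or_lt_of_le ht with h | h
    · simp [← h]
    · exact (Real.self_lt_sinh_iff.2 h).le
  have hsn : 0 ≤ Real.sinh t := le_trans ht h2
  nlinarith [mul_le_mul_of_nonneg_right h1 (by linarith : (0:ℝ) ≤ Real.sinh t + t),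
    mul_nonneg (mul_nonneg (sq_nonneg t) hsn) (by linarith : (0:ℝ) ≤ Real.sinh t - t)]

lemma hasDerivAt_crF (θ : ℝ) : HasDerivAt crF (crF1 θ) θ := by
  rcases eq_or_ne θ 0 with h | h
  · rw [h]; exact hasDerivAt_crF_zero
  · exact hasDerivAt_crF_ne θ h

lemma crF2_zero : crF2 0 = 1/3 := by simp [crF2]

lemma hasDerivAt_crF1 (θ : ℝ) : HasDerivAt crF1 (crF2 θ) θ := by
  rcases eq_or_ne θ 0 with h | h
  · rw [h, crF2_zero]; exact hasDerivAt_crF1_zero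
  · exact hasDerivAt_crF1_ne θ h

noncomputable def crL (θ : ℝ) : ℝ := Real.log (crF θ)
noncomputable def crG (θ : ℝ) : ℝ := crF1 θ / crF θ
noncomputable def crH (θ : ℝ) : ℝ := (crF2 θ * crF θ - crF1 θ^2) / (crF θ)^2

lemma hasDerivAt_crL (θ : ℝ) : HasDerivAt crL (crG θ) θ :=
  (hasDerivAt_crF θ).log (crF_pos θ).ne'

lemma hasDerivAt_crG (θ : ℝ) : HasDerivAt crG (crH θ) θ := by
  have h := (hasDerivAt_crF1 θ).div (hasDerivAt_crF θ) (crF_pos θ).ne'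
  exact h.congr_deriv (by
    unfold crH
    ring)

-- numerator of crH
lemma crH_num_eq {θ : ℝ} (h : θ ≠ 0) :
    crF2 θ * crF θ - crF1 θ^2 =
      Real.exp θ * (4 * Real.sinh (θ/2)^2 - θ^2) / θ^4 := by
  have hc : Real.cosh θ = 2 * Real.sinh (θ/2)^2 + 1 := by
    rw [show θ = 2*(θ/2) by ring, Real.cosh_two_mul, Real.cosh_sq]
    ring_nf
  have he : Real.exp θ + Real.exp (-θ) = 2 * Real.cosh θ := by
    rw [Real.cosh_eq]; ring
  have hinv : Real.exp (-θ) = (Real.exp θ)⁻¹ := Real.exp_neg θ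
  have hE : Real.exp θ ≠ 0 := (Real.exp_pos θ).ne'
  have key : Real.exp θ ^ 2 + 1 = (4 * Real.sinh (θ/2)^2 + 2) * Real.exp θ := by
    have : Real.exp θ + (Real.exp θ)⁻¹ = 2 * (2 * Real.sinh (θ/2)^2 + 1) := by
      rw [← hinv, ← hc, he]
    field_simp at this
    linarith
  have h1 : crF2 θ * crF θ - crF1 θ^2
      = (Real.exp θ ^ 2 + 1 - (θ^2+2) * Real.exp θ)/θ^4 := by
    rw [crF2_eq h, crF_eq h, crF1_eq h]
    field_simp
    ring
  rw [h1, key]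
  ring

lemma crF_sq_eq {θ : ℝ} (h : θ ≠ 0) :
    (crF θ)^2 = Real.exp θ * (4 * Real.sinh (θ/2)^2) / θ^2 := by
  have hc : Real.cosh θ = 2 * Real.sinh (θ/2)^2 + 1 := by
    rw [show θ = 2*(θ/2) by ring, Real.cosh_two_mul, Real.cosh_sq]
    ring_nf
  have he : Real.exp θ + Real.exp (-θ) = 2 * Real.cosh θ := by
    rw [Real.cosh_eq]; ring
  have hinv : Real.exp (-θ) = (Real.exp θ)⁻¹ := Real.exp_neg θ
  have hE : Real.exp θ ≠ 0 := (Real.exp_pos θ).ne'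
  have key : Real.exp θ ^ 2 + 1 = (4 * Real.sinh (θ/2)^2 + 2) * Real.exp θ := by
    have : Real.exp θ + (Real.exp θ)⁻¹ = 2 * (2 * Real.sinh (θ/2)^2 + 1) := by
      rw [← hinv, ← hc, he]
    field_simp at this
    linarith
  have h1 : (crF θ)^2 = (Real.exp θ ^ 2 + 1 - 2 * Real.exp θ)/θ^2 := by
    rw [crF_eq h]
    field_simp
    ring
  rw [h1, key]
  ring

lemma crH_zero : crH 0 = 1/12 := by
  simp [crH, crF, crF1, crF2]
  norm_num

lemma crH_pos (θ : ℝ) : 0 < crH θ := by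
  rcases eq_or_ne θ 0 with h | h
  · rw [h, crH_zero]; norm_num
  · unfold crH
    apply div_pos
    · rw [crH_num_eq h]
      apply div_pos
      · have hs := sq_lt_sinh_sq (t := θ/2) (by simpa using h)
        have := Real.exp_pos θ
        nlinarith
      · positivity
    · exact pow_pos (crF_pos θ) 2

lemma crH_le (θ : ℝ) : crH θ ≤ 1/12 := by
  rcases eq_or_ne θ 0 with h | h
  · rw [h, crH_zero]
  · unfold crH
    rw [div_le_iff₀ (pow_pos (crF_pos θ) 2), crH_num_eq h, crF_sq_eq h]
    set s := Real.sinh (θ/2) with hs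
    have hkey := key_sinh (θ/2)
    have hE := Real.exp_pos θ
    have h4 : (0:ℝ) < θ^4 := by positivity
    have h2 : (0:ℝ) < θ^2 := by positivity
    rw [div_le_iff₀ h4]
    have hrhs : 1/12 * (Real.exp θ * (4*s^2) / θ^2) * θ^4 = Real.exp θ * (s^2 * θ^2 / 3) := by
      field_simp
      ring
    rw [hrhs]
    have hb : 4*s^2 - θ^2 ≤ s^2 * θ^2 / 3 := by nlinarith [hkey]
    nlinarith [mul_le_mul_of_nonneg_left hb hE.le]

lemma crG_zero : crG 0 = 1/2 := by simp [crG, crF, crF1]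

lemma strictMono_crG : StrictMono crG := by
  apply strictMono_of_deriv_pos
  intro x
  rw [(hasDerivAt_crG x).deriv]
  exact crH_pos x

lemma continuous_crG : Continuous crG := by
  apply continuous_iff_continuousAt.2
  intro x
  exact (hasDerivAt_crG x).continuousAt

lemma crF1_pos (θ : ℝ) : 0 < crF1 θ := by
  rcases eq_or_ne θ 0 with h | h
  · simp [h, crF1]
  · rw [crF1_eq h]
    apply div_pos _ (by positivity)
    have h1 := Real.add_one_lt_exp (neg_ne_zero.2 h)
    rw [Real.exp_neg] at h1
    have hE := Real.exp_pos θ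
    have : (1 - θ) * Real.exp θ < 1 := by
      have h2 := mul_lt_mul_of_pos_right h1 hE
      rw [inv_mul_cancel₀ hE.ne'] at h2
      linarith
    nlinarith
  
lemma crF1_lt_crF (θ : ℝ) : crF1 θ < crF θ := by
  rcases eq_or_ne θ 0 with h | h
  · simp [h, crF1, crF]; norm_num
  · have key : crF θ - crF1 θ = (Real.exp θ - 1 - θ)/θ^2 := by
      rw [crF1_eq h, crF_eq h]
      field_simp
      ring
    have h1 := Real.add_one_lt_exp h
    have h2 : (0:ℝ) < (Real.exp θ - 1 - θ)/θ^2 := by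
      apply div_pos (by linarith) (by positivity)
    linarith [key ▸ h2]
  
lemma crG_mem (θ : ℝ) : crG θ ∈ Ioo (0:ℝ) 1 := by
  constructor
  · exact div_pos (crF1_pos θ) (crF_pos θ)
  · unfold crG
    rw [div_lt_one (crF_pos θ)]
    exact crF1_lt_crF θ

lemma crG_lt_of_neg {θ : ℝ} (h : θ < 0) : crG θ < -1/θ := by
  have hne : θ ≠ 0 := h.ne
  have key : crG θ + 1/θ = Real.exp θ / (θ * crF θ) := by
    unfold crG
    rw [crF_eq hne, crF1_eq hne]
    have hE1 : Real.exp θ - 1 ≠ 0 := by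
      have := Real.exp_lt_one_iff.2 h
      intro hc; nlinarith
    field_simp
    ring
  have hneg : Real.exp θ / (θ * crF θ) < 0 := by
    apply div_neg_of_pos_of_neg (Real.exp_pos θ)
    exact mul_neg_of_neg_of_pos h (crF_pos θ)
  have := key ▸ hneg
  have hd : -1/θ = -(1/θ) := by ring
  rw [hd]
  linarith [this]

lemma crG_gt_of_pos {θ : ℝ} (h : 0 < θ) : 1 - 1/θ < crG θ := by
  have hne : θ ≠ 0 := h.ne'
  have key : 1 - crG θ - 1/θ = -1 / (θ * crF θ) := by
    unfold crG
    rw [crF_eq hne, crF1_eq hne]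
    have hE1 : Real.exp θ - 1 ≠ 0 := by
      have h1 := Real.add_one_lt_exp hne
      intro hc; nlinarith
    field_simp
    ring
  have hneg : -1 / (θ * crF θ) < 0 :=
    div_neg_of_neg_of_pos (by norm_num) (mul_pos h (crF_pos θ))
  have := key ▸ hneg
  linarith [this]

lemma crG_surj {u : ℝ} (hu : u ∈ Ioo (0:ℝ) 1) : ∃ θ, crG θ = u := by
  obtain ⟨hu0, hu1⟩ := hu
  set a : ℝ := -2/u with ha
  set b : ℝ := 2/(1-u) with hb
  have ha0 : a < 0 := by
    rw [ha]; apply div_neg_of_neg_of_pos (by norm_num) hu0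
  have hb0 : 0 < b := by
    rw [hb]; apply div_pos (by norm_num) (by linarith)
  have hga : crG a < u := by
    have := crG_lt_of_neg ha0
    have h2 : -1/a = u/2 := by rw [ha]; field_simp
    rw [h2] at this
    linarith
  have hgb : u < crG b := by
    have := crG_gt_of_pos hb0
    have h2 : 1 - 1/b = (1+u)/2 := by rw [hb]; field_simp; ring
    rw [h2] at this
    linarith
  have hab : a ≤ b := by linarith
  have := intermediate_value_Icc hab continuous_crG.continuousOn
  have hmem : u ∈ Icc (crG a) (crG b) := ⟨hga.le, hgb.le⟩
  obtain ⟨θ, _, hθ⟩ := this hmem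
  exact ⟨θ, hθ⟩

open Classical in
noncomputable def crPsi (u : ℝ) : ℝ :=
  if h : ∃ θ, crG θ = u then h.choose else 0

lemma crG_crPsi {u : ℝ} (hu : u ∈ Ioo (0:ℝ) 1) : crG (crPsi u) = u := by
  have h := crG_surj hu
  rw [crPsi, dif_pos h]
  exact h.choose_spec

lemma crPsi_eq {u θ : ℝ} (hu : u ∈ Ioo (0:ℝ) 1) (h : crG θ = u) : crPsi u = θ :=
  strictMono_crG.injective (by rw [crG_crPsi hu, h])

lemma continuousAt_crPsi {u : ℝ} (hu : u ∈ Ioo (0:ℝ) 1) : ContinuousAt crPsi u := by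
  rw [Metric.continuousAt_iff]
  intro ε hε
  set θ₀ := crPsi u with hθ₀
  have hgu : crG θ₀ = u := crG_crPsi hu
  set εl := crG (θ₀ - ε/2) with hεl
  set εr := crG (θ₀ + ε/2) with hεr
  have hl : εl < u := by rw [← hgu]; exact strictMono_crG (by linarith)
  have hr : u < εr := by rw [← hgu]; exact strictMono_crG (by linarith)
  refine ⟨min (u - εl) (εr - u), lt_min (by linarith) (by linarith), ?_⟩
  intro v hv
  rw [Real.dist_eq] at hv
  have hv1 : εl < v := by
    have := abs_lt.1 hv
    have := min_le_left (u - εl) (εr - u)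
    linarith [this, (abs_lt.1 hv).1]
  have hv2 : v < εr := by
    linarith [min_le_right (u - εl) (εr - u), (abs_lt.1 hv).2]
  have hvIoo : v ∈ Ioo (0:ℝ) 1 := by
    constructor
    · linarith [(crG_mem (θ₀ - ε/2)).1]
    · linarith [(crG_mem (θ₀ + ε/2)).2]
  have hgv : crG (crPsi v) = v := crG_crPsi hvIoo
  have hb1 : θ₀ - ε/2 < crPsi v := by
    by_contra hc
    push_neg at hc
    have := strictMono_crG.monotone hc
    rw [hgv] at this
    exact absurd hv1 (not_lt.2 this)
  have hb2 : crPsi v < θ₀ + ε/2 := by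
    by_contra hc
    push_neg at hc
    have := strictMono_crG.monotone hc
    rw [hgv] at this
    exact absurd hv2 (not_lt.2 this)
  rw [Real.dist_eq, abs_lt]
  constructor <;> [linarith; linarith]

lemma hasDerivAt_crPsi {u : ℝ} (hu : u ∈ Ioo (0:ℝ) 1) :
    HasDerivAt crPsi (crH (crPsi u))⁻¹ u := by
  apply HasDerivAt.of_local_left_inverse (continuousAt_crPsi hu)
    (hasDerivAt_crG (crPsi u)) (crH_pos (crPsi u)).ne'
  filter_upwards [Ioo_mem_nhds hu.1 hu.2] with v hv
  exact crG_crPsi hv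

lemma crL_tangent (θ θ₀ : ℝ) : crL θ₀ + crG θ₀ * (θ - θ₀) ≤ crL θ := by
  rcases lt_trichotomy θ θ₀ with h | h | h
  · obtain ⟨c, hc, hslope⟩ := exists_hasDerivAt_eq_slope crL crG h
      (fun x _ => (hasDerivAt_crL x).continuousAt.continuousWithinAt)
      (fun x _ => hasDerivAt_crL x)
    have hcle : crG c ≤ crG θ₀ := (strictMono_crG (show c < θ₀ from hc.2)).le
    have : (crL θ₀ - crL θ) / (θ₀ - θ) ≤ crG θ₀ := hslope ▸ hcle
    have hpos : 0 < θ₀ - θ := by linarith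
    rw [div_le_iff₀ hpos] at this
    nlinarith
  · simp [h]
  · obtain ⟨c, hc, hslope⟩ := exists_hasDerivAt_eq_slope crL crG h
      (fun x _ => (hasDerivAt_crL x).continuousAt.continuousWithinAt)
      (fun x _ => hasDerivAt_crL x)
    have hcle : crG θ₀ ≤ crG c := (strictMono_crG (show θ₀ < c from hc.1)).le
    have : crG θ₀ ≤ (crL θ - crL θ₀) / (θ - θ₀) := hslope ▸ hcle
    have hpos : 0 < θ - θ₀ := by linarith
    rw [le_div_iff₀ hpos] at this
    nlinarith

lemma legendre_eq {u : ℝ} (hu : u ∈ Ioo (0:ℝ) 1) :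
    (⨆ θ : ℝ, (θ * u - crL θ)) = crPsi u * u - crL (crPsi u) := by
  set θ₀ := crPsi u with hθ₀
  have hgu : crG θ₀ = u := crG_crPsi hu
  have hbound : ∀ θ : ℝ, θ * u - crL θ ≤ θ₀ * u - crL θ₀ := by
    intro θ
    have := crL_tangent θ θ₀
    rw [hgu] at this
    nlinarith
  apply le_antisymm
  · exact ciSup_le hbound
  · exact le_ciSup ⟨θ₀ * u - crL θ₀, fun x ⟨θ, hθ⟩ => hθ ▸ hbound θ⟩ θ₀

/-- For `p = 2`, with `I` the Cramér rate function of the uniform distribution on (0,1),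
the function `m(u) = I''(u)/4` attains its global minimum on `(0,1)` at `u₀ = 1/2`,
with `m(1/2) = 3`. -/
theorem m_min_at_half
    (M : ℝ → ℝ) (hM : ∀ θ : ℝ, M θ = if θ = 0 then 1 else (Real.exp θ - 1) / θ)
    (I : ℝ → ℝ) (hI : ∀ u : ℝ, I u = ⨆ θ : ℝ, (θ * u - Real.log (M θ)))
    (m : ℝ → ℝ) (hm : ∀ u : ℝ, m u = deriv (deriv I) u / 4) :
    (∀ u ∈ Set.Ioo (0:ℝ) 1, m (1/2) ≤ m u) ∧ m (1/2) = 3 := by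
  have hIeq : ∀ u : ℝ, I u = ⨆ θ : ℝ, (θ * u - crL θ) := by
    intro u
    have heq : (fun θ : ℝ => θ * u - Real.log (M θ)) = fun θ : ℝ => θ * u - crL θ :=
      funext fun θ => by rw [hM θ]; rfl
    rw [hI u, heq]
  set J : ℝ → ℝ := fun u => crPsi u * u - crL (crPsi u) with hJ
  have hIJ : ∀ u ∈ Ioo (0:ℝ) 1, I u = J u := fun u hu => by
    rw [hIeq u, legendre_eq hu]
  have hJder : ∀ u ∈ Ioo (0:ℝ) 1, HasDerivAt J (crPsi u) u := by
    intro u hu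
    have hψ := hasDerivAt_crPsi hu
    have h1 : HasDerivAt (fun v => crPsi v * v)
        ((crH (crPsi u))⁻¹ * u + crPsi u * 1) u := hψ.mul (hasDerivAt_id' (x := u))
    have h2 : HasDerivAt (fun v => crL (crPsi v))
        (crG (crPsi u) * (crH (crPsi u))⁻¹) u := (hasDerivAt_crL (crPsi u)).comp u hψ
    have h3 := h1.sub h2
    exact h3.congr_deriv (by
      rw [crG_crPsi hu]
      ring)
  have hIder : ∀ u ∈ Ioo (0:ℝ) 1, HasDerivAt I (crPsi u) u := by
    intro u hu
    apply (hJder u hu).congr_of_eventuallyEq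
    filter_upwards [Ioo_mem_nhds hu.1 hu.2] with v hv
    exact hIJ v hv
  have hderivI : ∀ u ∈ Ioo (0:ℝ) 1, deriv I u = crPsi u := fun u hu => (hIder u hu).deriv
  have hder2 : ∀ u ∈ Ioo (0:ℝ) 1, HasDerivAt (deriv I) (crH (crPsi u))⁻¹ u := by
    intro u hu
    apply (hasDerivAt_crPsi hu).congr_of_eventuallyEq
    filter_upwards [Ioo_mem_nhds hu.1 hu.2] with v hv
    exact hderivI v hv
  have hm' : ∀ u ∈ Ioo (0:ℝ) 1, m u = (crH (crPsi u))⁻¹ / 4 := fun u hu => by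
    rw [hm u, (hder2 u hu).deriv]
  have hhalf : (1:ℝ)/2 ∈ Ioo (0:ℝ) 1 := by norm_num
  have hψhalf : crPsi (1/2) = 0 := crPsi_eq hhalf crG_zero
  have hm12 : m (1/2) = 3 := by
    rw [hm' _ hhalf, hψhalf, crH_zero]
    norm_num
  refine ⟨?_, hm12⟩
  intro u hu
  rw [hm12, hm' u hu]
  have h1 := crH_pos (crPsi u)
  have h2 := crH_le (crPsi u)
  have h12 : (12:ℝ) ≤ (crH (crPsi u))⁻¹ := by
    have := one_div_le_one_div_of_le h1 h2
    rw [one_div, inv_eq_one_div] at this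
    norm_num at this
    linarith
  linarith
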